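/- For n ≥ 3, the dihedral group D_n = ⟨σ, τ | σ² = τⁿ = 1, στσ = τ⁻¹⟩ has wreath length 2, while d(D_n) = 1 if n is odd and d(D_n) = 2 if n is even; in particular wl(S₃) = 2 ≠ 1 = d(S₃). -/

import Mathlib

/-- The automorphism action of `G` on `G → H` by right translation:
`(wrAut H G g) f x = f (x * g)`, so that the semidirect product below has
multiplication `(f₁, g₁)(f₂, g₂) = (f₁ · f₂^{g₁⁻¹}, g₁g₂)` with
`f₂^{g₁⁻¹}(x) = f₂ (x * g₁)`. -/
def wrAut (H G : Type*) [Group H] [Group G] : G →* MulAut (G → H) where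
  toFun g :=
    { toFun := fun f x => f (x * g)
      invFun := fun f x => f (x * g⁻¹)
      left_inv := fun f => funext fun x => by simp [mul_assoc]
      right_inv := fun f => funext fun x => by simp [mul_assoc]
      map_mul' := fun f₁ f₂ => rfl }
  map_one' := MulEquiv.ext fun f => funext fun x => by simp
  map_mul' := fun g₁ g₂ => MulEquiv.ext fun f => funext fun x => by simp [mul_assoc]

/-- The standard (regular) wreath product `H ≀ G`. -/
abbrev Wr (H G : Type*) [Group H] [Group G] := SemidirectProduct (G → H) G (wrAut H G)

/-- The standard wreath product of bundled groups. -/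
def WrGrp (H G : GrpCat.{u}) : GrpCat.{u} := GrpCat.of (Wr H G)

/-- Descending iterated standard wreath product `C₁ ≀ (C₂ ≀ (⋯ ≀ C_r)⋯)`,
given by a head group and the list of remaining groups. -/
def descW : GrpCat.{u} → List GrpCat.{u} → GrpCat.{u}
  | G, [] => G
  | G, H :: t => WrGrp G (descW H t)

/-- Ascending iterated standard wreath product `(⋯(C₁ ≀ C₂) ≀ ⋯) ≀ C_r`,
given by a head group and the list of remaining groups. -/
def ascW : GrpCat.{u} → List GrpCat.{u} → GrpCat.{u}
  | G, [] => G
  | G, H :: t => ascW (WrGrp G H) t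

/-- Minimal number of generators of a group. -/
noncomputable def mingen (G : Type*) [Group G] : ℕ :=
  sInf {n | ∃ S : Finset G, S.card = n ∧ Subgroup.closure (S : Set G) = ⊤}

/-- `d(G)`: minimal size of a subset whose normal closure is all of `G`. -/
noncomputable def dgen (G : Type*) [Group G] : ℕ :=
  sInf {n | ∃ S : Finset G, S.card = n ∧ Subgroup.normalClosure (S : Set G) = ⊤}

/-- Derived length: the least `n` with `derivedSeries G n = ⊥`. -/
noncomputable def dl (G : Type*) [Group G] : ℕ :=
  sInf {n | derivedSeries G n = ⊥}

/-- Wreath length: the least `r ≥ 1` such that `G` is an epimorphic image of a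
descending iterated standard wreath product of `r` finite cyclic groups. -/
noncomputable def wl (G : Type u) [Group G] : ℕ :=
  sInf {r | ∃ (C : GrpCat.{u}) (l : List GrpCat.{u}), r = l.length + 1 ∧
    (Finite C ∧ IsCyclic C) ∧ (∀ H ∈ l, Finite H ∧ IsCyclic H) ∧
    ∃ π : descW C l →* G, Function.Surjective π}

open DihedralGroup Multiplicative Subgroup

def aof {n : ℕ} (f : Multiplicative (ZMod 2) → Multiplicative (ZMod n)) : ZMod n :=
  (f 1).toAdd - (f (ofAdd 1)).toAdd

lemma zmod2_cases (g : Multiplicative (ZMod 2)) : g = 1 ∨ g = ofAdd (1 : ZMod 2) := by revert g; decide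

lemma aof_mul {n : ℕ} (f₁ f₂ : Multiplicative (ZMod 2) → Multiplicative (ZMod n)) :
    aof (f₁ * f₂) = aof f₁ + aof f₂ := by
  simp [aof, Pi.mul_apply, toAdd_mul]; ring

lemma aof_shift {n : ℕ} (f : Multiplicative (ZMod 2) → Multiplicative (ZMod n)) :
    aof (fun x => f (x * ofAdd 1)) = - aof f := by
  have h1 : (1 : Multiplicative (ZMod 2)) * ofAdd 1 = ofAdd 1 := one_mul _
  have h2 : (ofAdd 1 : Multiplicative (ZMod 2)) * ofAdd 1 = 1 := by decide
  simp only [aof, h1, h2]; ring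

def toD (n : ℕ) : Wr (Multiplicative (ZMod n)) (Multiplicative (ZMod 2)) →* DihedralGroup n where
  toFun x := if x.right = 1 then .r (aof x.left) else .sr (-(aof x.left))
  map_one' := by simp [aof, one_def, -r_zero]
  map_mul' a b := by
    have hw : ∀ (f : Multiplicative (ZMod 2) → Multiplicative (ZMod n)),
        (wrAut (Multiplicative (ZMod n)) (Multiplicative (ZMod 2)) (ofAdd 1)) f
          = fun x => f (x * ofAdd 1) := fun f => rfl
    have hne : (ofAdd 1 : Multiplicative (ZMod 2)) ≠ 1 := by decide
    have hss : (ofAdd 1 : Multiplicative (ZMod 2)) * ofAdd 1 = 1 := by decide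
    rcases zmod2_cases a.right with h1 | h1 <;> rcases zmod2_cases b.right with h2 | h2 <;>
      simp [SemidirectProduct.mul_left, SemidirectProduct.mul_right, h1, h2, hne, hss, hw,
        aof_mul, aof_shift, r_mul_r, r_mul_sr, sr_mul_r, sr_mul_sr] <;> ring_nf

lemma toD_surj (n : ℕ) : Function.Surjective (toD n) := by
  have hne : (ofAdd (1 : ZMod 2)) ≠ (1 : Multiplicative (ZMod 2)) := by decide
  rintro (i | i)
  · refine ⟨⟨fun x => if x = 1 then ofAdd i else 1, 1⟩, ?_⟩
    simp [toD, aof, hne]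
  · refine ⟨⟨fun x => if x = 1 then ofAdd (-i) else 1, ofAdd (1 : ZMod 2)⟩, ?_⟩
    simp [toD, aof, hne]

def sgnFun {n : ℕ} : DihedralGroup n → Multiplicative (ZMod 2)
  | .r _ => 1
  | .sr _ => ofAdd 1

def chiS (n : ℕ) : DihedralGroup n →* Multiplicative (ZMod 2) :=
  MonoidHom.mk' sgnFun (by
    rintro (i | i) (j | j) <;>
      simp [sgnFun, r_mul_r, r_mul_sr, sr_mul_r, sr_mul_sr] <;> decide)

lemma chiS_surj (n : ℕ) : Function.Surjective (chiS n) := by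
  intro y
  rcases zmod2_cases y with h | h
  · exact ⟨.r 0, by simp [h, chiS, sgnFun, -r_zero]⟩
  · exact ⟨.sr 0, by simp [h, chiS, sgnFun]⟩

def tFun {n : ℕ} (h : (2 : ℕ) ∣ n) : DihedralGroup n → Multiplicative (ZMod 2)
  | .r i => ofAdd (ZMod.castHom h (ZMod 2) i)
  | .sr i => ofAdd (ZMod.castHom h (ZMod 2) i)

def chiT {n : ℕ} (h : (2 : ℕ) ∣ n) : DihedralGroup n →* Multiplicative (ZMod 2) :=
  MonoidHom.mk' (tFun h) (by
    have key : ∀ a b : ZMod 2, b - a = a + b := by decide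
    rintro (i | i) (j | j) <;>
      simp [tFun, r_mul_r, r_mul_sr, sr_mul_r, sr_mul_sr, map_add, map_sub, key, ← ofAdd_add] <;>
      try rw [key]
  )

lemma chiT_surj {n : ℕ} (h : (2 : ℕ) ∣ n) : Function.Surjective (chiT h) := by
  intro y
  rcases zmod2_cases y with hy | hy
  · exact ⟨.r 0, by simp [hy, chiT, tFun, -r_zero]⟩
  · refine ⟨.r 1, ?_⟩
    have h1 : (ZMod.castHom h (ZMod 2)) (1 : ZMod n) = 1 := map_one _
    simp [hy, chiT, tFun, h1]

/-- For even `n`, every element of `D_n` is killed by some surjective character to `Z/2`. -/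
lemma exists_char {n : ℕ} (h : (2 : ℕ) ∣ n) (x : DihedralGroup n) :
    ∃ χ : DihedralGroup n →* Multiplicative (ZMod 2),
      Function.Surjective χ ∧ χ x = 1 := by
  have hcases : ∀ a : ZMod 2, a = 0 ∨ a = 1 := by decide
  rcases x with i | i
  · exact ⟨chiS n, chiS_surj n, rfl⟩
  · rcases hcases (ZMod.castHom h (ZMod 2) i) with hi | hi
    · refine ⟨chiT h, chiT_surj h, ?_⟩
      show ofAdd (ZMod.castHom h (ZMod 2) i) = 1
      rw [hi]; rfl
    · refine ⟨(chiS n) * (chiT h), ?_, ?_⟩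
      · intro y
        rcases zmod2_cases y with hy | hy
        · exact ⟨1, by rw [map_one, hy]⟩
        · refine ⟨.r 1, ?_⟩
          have h1 : (ZMod.castHom h (ZMod 2)) (1 : ZMod n) = 1 := map_one _
          show (chiS n) (.r 1) * (chiT h) (.r 1) = y
          have ht : tFun h (DihedralGroup.r (1 : ZMod n)) = ofAdd (1 : ZMod 2) := by
            show ofAdd (ZMod.castHom h (ZMod 2) 1) = _
            rw [h1]
          show sgnFun (DihedralGroup.r (1 : ZMod n)) * tFun h (DihedralGroup.r 1) = y
          rw [ht, hy]
          show (1 : Multiplicative (ZMod 2)) * ofAdd 1 = ofAdd 1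
          decide
      · show (chiS n) (.sr i) * (chiT h) (.sr i) = 1
        have ht : tFun h (.sr i) = ofAdd (1 : ZMod 2) := by
          show ofAdd (ZMod.castHom h (ZMod 2) i) = _
          rw [hi]
        show sgnFun (.sr i) * tFun h (.sr i) = 1
        rw [ht]
        show ofAdd (1 : ZMod 2) * ofAdd (1 : ZMod 2) = 1
        decide

lemma normalClosure_singleton_ne_top {n : ℕ} (h : (2 : ℕ) ∣ n) (x : DihedralGroup n) :
    Subgroup.normalClosure ({x} : Set (DihedralGroup n)) ≠ ⊤ := by
  obtain ⟨χ, hsurj, hx⟩ := exists_char h x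
  intro htop
  have hle : Subgroup.normalClosure ({x} : Set (DihedralGroup n)) ≤ χ.ker :=
    Subgroup.normalClosure_le_normal (by
      intro y hy
      rw [Set.mem_singleton_iff] at hy
      subst hy
      simpa [MonoidHom.mem_ker] using hx)
  rw [htop, top_le_iff] at hle
  obtain ⟨y, hy⟩ := hsurj (ofAdd (1 : ZMod 2))
  have : χ y = 1 := by rw [← MonoidHom.mem_ker, hle]; trivial
  rw [hy] at this
  exact absurd this (by decide)

lemma normalClosure_sr_eq_top {n : ℕ} [NeZero n] (hodd : Odd n) :
    Subgroup.normalClosure ({DihedralGroup.sr 0} : Set (DihedralGroup n)) = ⊤ := by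
  set N := Subgroup.normalClosure ({DihedralGroup.sr 0} : Set (DihedralGroup n)) with hN
  have hmem : DihedralGroup.sr (0 : ZMod n) ∈ N := Subgroup.subset_normalClosure rfl
  have hnormal : N.Normal := Subgroup.normalClosure_normal
  have hu : IsUnit (2 : ZMod n) := by
    have := (ZMod.isUnit_iff_coprime 2 n).2 (Nat.coprime_two_left.2 hodd)
    simpa using this
  have hsr : ∀ j : ZMod n, DihedralGroup.sr j ∈ N := by
    intro j
    obtain ⟨u, hu2⟩ := hu
    have hk : ∃ k : ZMod n, (0 - k) + -k = j := by
      refine ⟨(↑u⁻¹ : ZMod n) * (-j), ?_⟩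
      have h2 : (2 : ZMod n) * ((↑u⁻¹ : ZMod n) * (-j)) = -j := by
        rw [← hu2, ← mul_assoc, Units.mul_inv, one_mul]
      have := h2
      ring_nf
      ring_nf at this
      linear_combination -this
    obtain ⟨k, hk⟩ := hk
    have hc := hnormal.conj_mem _ hmem (DihedralGroup.r k)
    have hinv : (DihedralGroup.r k)⁻¹ = DihedralGroup.r (-k) := rfl
    rw [hinv, DihedralGroup.r_mul_sr, DihedralGroup.sr_mul_r, hk] at hc
    exact hc
  rw [eq_top_iff']
  rintro (i | i)
  · have := N.mul_mem (hsr 0) (hsr i)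
    rw [DihedralGroup.sr_mul_sr, sub_zero] at this
    exact this
  · exact hsr i

lemma normalClosure_pair_eq_top {n : ℕ} [NeZero n] :
    Subgroup.normalClosure ({DihedralGroup.r 1, DihedralGroup.sr 0} : Set (DihedralGroup n)) = ⊤ := by
  set N := Subgroup.normalClosure
      ({DihedralGroup.r 1, DihedralGroup.sr 0} : Set (DihedralGroup n)) with hN
  have hr1 : DihedralGroup.r (1 : ZMod n) ∈ N :=
    Subgroup.subset_normalClosure (Set.mem_insert _ _)
  have hsr0 : DihedralGroup.sr (0 : ZMod n) ∈ N :=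
    Subgroup.subset_normalClosure (Set.mem_insert_of_mem _ rfl)
  have hr : ∀ i : ZMod n, DihedralGroup.r i ∈ N := by
    intro i
    have := N.pow_mem hr1 i.val
    rwa [DihedralGroup.r_one_pow, ZMod.natCast_val, ZMod.cast_id] at this
  rw [eq_top_iff']
  rintro (i | i)
  · exact hr i
  · have := N.mul_mem hsr0 (hr i)
    rwa [DihedralGroup.sr_mul_r, zero_add] at this

lemma dgen_eq_one {G : Type*} [Group G] [Nontrivial G] (x : G)
    (hx : Subgroup.normalClosure ({x} : Set G) = ⊤) : dgen G = 1 := by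
  rw [dgen]
  have h1 : 1 ∈ {m | ∃ S : Finset G, S.card = m ∧ Subgroup.normalClosure (S : Set G) = ⊤} :=
    ⟨{x}, Finset.card_singleton x, by simpa using hx⟩
  refine le_antisymm (Nat.sInf_le h1) ?_
  rw [Nat.one_le_iff_ne_zero]
  intro h0
  rw [Nat.sInf_eq_zero] at h0
  rcases h0 with h0 | h0
  · obtain ⟨S, hc, hS⟩ := h0
    rw [Finset.card_eq_zero] at hc; subst hc
    simp only [Finset.coe_empty] at hS
    have hle : (⊤ : Subgroup G) ≤ ⊥ := by
      rw [← hS]; exact Subgroup.normalClosure_le_normal (Set.empty_subset _)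
    obtain ⟨a, ha⟩ := exists_ne (1 : G)
    exact ha (by simpa using hle (Subgroup.mem_top a))
  · exact absurd (h0 ▸ h1) (Set.notMem_empty 1)

lemma dgen_eq_two {G : Type*} [Group G] [DecidableEq G] [Nontrivial G] (x y : G) (hxy : x ≠ y)
    (hclos : Subgroup.normalClosure ({x, y} : Set G) = ⊤)
    (h1 : ∀ z : G, Subgroup.normalClosure ({z} : Set G) ≠ ⊤) : dgen G = 2 := by
  rw [dgen]
  have h2 : 2 ∈ {m | ∃ S : Finset G, S.card = m ∧ Subgroup.normalClosure (S : Set G) = ⊤} :=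
    ⟨{x, y}, Finset.card_pair hxy, by simpa using hclos⟩
  refine le_antisymm (Nat.sInf_le h2) (le_csInf ⟨2, h2⟩ ?_)
  rintro b ⟨S, hc, hS⟩
  rcases b with _ | b
  · rw [Finset.card_eq_zero] at hc; subst hc
    simp only [Finset.coe_empty] at hS
    have hle : (⊤ : Subgroup G) ≤ ⊥ := by
      rw [← hS]; exact Subgroup.normalClosure_le_normal (Set.empty_subset _)
    obtain ⟨a, ha⟩ := exists_ne (1 : G)
    exact absurd (by simpa using hle (Subgroup.mem_top a)) ha
  rcases b with _ | b
  · rw [Finset.card_eq_one] at hc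
    obtain ⟨z, rfl⟩ := hc
    simp only [Finset.coe_singleton] at hS
    exact absurd hS (h1 z)
  · omega

lemma wl_eq_two {G : Type} [Group G] (n : ℕ) [NeZero n]
    (π : Wr (Multiplicative (ZMod n)) (Multiplicative (ZMod 2)) →* G)
    (hπ : Function.Surjective π)
    (hnc : ∃ a b : G, a * b ≠ b * a) : wl G = 2 := by
  rw [wl]
  have h2 : 2 ∈ {r | ∃ (C : GrpCat.{0}) (l : List GrpCat.{0}), r = l.length + 1 ∧
      (Finite C ∧ IsCyclic C) ∧ (∀ H ∈ l, Finite H ∧ IsCyclic H) ∧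
      ∃ π : descW C l →* G, Function.Surjective π} := by
    refine ⟨GrpCat.of (Multiplicative (ZMod n)), [GrpCat.of (Multiplicative (ZMod 2))], rfl,
      ⟨inferInstanceAs (Finite (Multiplicative (ZMod n))),
       inferInstanceAs (IsCyclic (Multiplicative (ZMod n)))⟩, ?_, ?_⟩
    · rintro H hH
      rw [List.mem_singleton] at hH
      subst hH
      exact ⟨inferInstanceAs (Finite (Multiplicative (ZMod 2))),
        inferInstanceAs (IsCyclic (Multiplicative (ZMod 2)))⟩
    · exact ⟨π, hπ⟩
  refine le_antisymm (Nat.sInf_le h2) (le_csInf ⟨2, h2⟩ ?_)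
  rintro b ⟨C, l, rfl, ⟨hCf, hCc⟩, -, π', hπ'⟩
  rcases l with - | ⟨H, t⟩
  · exfalso
    obtain ⟨a, b, hab⟩ := hnc
    letI : CommGroup C := IsCyclic.commGroup
    obtain ⟨x, rfl⟩ := hπ' a
    obtain ⟨y, rfl⟩ := hπ' b
    letI : CommGroup ↥(descW C []) := IsCyclic.commGroup (α := ↥C)
    have h := congrArg π' (mul_comm x y)
    rw [map_mul, map_mul] at h
    exact hab h
  · simp only [List.length_cons]
    omega

def d3s3fun : DihedralGroup 3 → Equiv.Perm (Fin 3)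
  | .r i => finRotate 3 ^ i.val
  | .sr i => Equiv.swap 0 1 * finRotate 3 ^ i.val

def d3s3 : DihedralGroup 3 →* Equiv.Perm (Fin 3) :=
  MonoidHom.mk' d3s3fun (by decide)

lemma d3s3_surj : Function.Surjective d3s3 := by
  show Function.Surjective d3s3fun
  decide


/-- For `n ≥ 3`, the dihedral group `D_n` has wreath length `2`,
while `d(D_n) = 1` if `n` is odd and `d(D_n) = 2` if `n` is even; in particular
`wl(S₃) = 2 ≠ 1 = d(S₃)`. -/
theorem stmt18 :
    (∀ n : ℕ, 3 ≤ n →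
      wl (DihedralGroup n) = 2 ∧
      (Odd n → dgen (DihedralGroup n) = 1) ∧
      (Even n → dgen (DihedralGroup n) = 2)) ∧
    wl (Equiv.Perm (Fin 3)) = 2 ∧ dgen (Equiv.Perm (Fin 3)) = 1 := by
  constructor
  · intro n hn
    haveI : NeZero n := ⟨by omega⟩
    haveI : Nontrivial (DihedralGroup n) := ⟨⟨.r 0, .sr 0, by simp [-r_zero]⟩⟩
    have hne : (DihedralGroup.sr 0 * DihedralGroup.r 1 : DihedralGroup n)
        ≠ DihedralGroup.r 1 * DihedralGroup.sr 0 := by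
      rw [DihedralGroup.sr_mul_r, DihedralGroup.r_mul_sr, zero_add]
      intro h
      rw [DihedralGroup.sr.injEq] at h
      have h2 : (2 : ZMod n) = 0 := by linear_combination h
      rw [show (2 : ZMod n) = ((2 : ℕ) : ZMod n) by push_cast; ring,
        ZMod.natCast_eq_zero_iff] at h2
      have := Nat.le_of_dvd (by norm_num) h2
      omega
    refine ⟨wl_eq_two n (toD n) (toD_surj n) ⟨_, _, hne⟩, ?_, ?_⟩
    · intro hodd
      exact dgen_eq_one _ (normalClosure_sr_eq_top hodd)
    · intro heven
      refine dgen_eq_two (DihedralGroup.r 1) (DihedralGroup.sr 0) (by simp)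
        normalClosure_pair_eq_top ?_
      intro z
      exact normalClosure_singleton_ne_top (heven.two_dvd) z
  · constructor
    · refine wl_eq_two 3 (d3s3.comp (toD 3)) (d3s3_surj.comp (toD_surj 3)) ?_
      decide
    · haveI : Nontrivial (Equiv.Perm (Fin 3)) := ⟨⟨Equiv.swap 0 1, 1, by decide⟩⟩
      have hmap := Subgroup.map_normalClosure ({(.sr 0 : DihedralGroup 3)} : Set _)
        d3s3 d3s3_surj
      rw [normalClosure_sr_eq_top (by decide : Odd 3),
        Subgroup.map_top_of_surjective _ d3s3_surj, Set.image_singleton] at hmap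
      exact dgen_eq_one _ hmap.symm
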